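/- Let (S, ≤_S) be a well-quasi-ordered set, (T, ≤_T) a well-founded ordered set, and φ: S → T a decreasing map, i.e. s ≤_S t implies φ(t) ≤_T φ(s) for all s, t ∈ S. Then the quasi-ordering ≤_φ on S defined by s ≤_φ t iff s ≤_S t and φ(s) = φ(t) is a well-quasi-ordering. -/

import Mathlib

/-- Let `(S, ≤_S)` be a well-quasi-ordered set, `(T, ≤_T)` a
well-founded ordered set (no infinite strictly decreasing sequences), and `φ : S → T`
decreasing.  Then the quasi-ordering `s ≤_φ t ↔ s ≤_S t ∧ φ s = φ t` is a
well-quasi-ordering. -/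
theorem stmt11 {S T : Type*} (rS : S → S → Prop) (rT : T → T → Prop)
    (hSrefl : ∀ s : S, rS s s)
    (hStrans : ∀ s t u : S, rS s t → rS t u → rS s u)
    (hSwqo : ∀ f : ℕ → S, ∃ i j : ℕ, i < j ∧ rS (f i) (f j))
    (hT : IsPartialOrder T rT)
    (hTwf : ¬ ∃ g : ℕ → T, ∀ n : ℕ, rT (g (n + 1)) (g n) ∧ g (n + 1) ≠ g n)
    (φ : S → T) (hφ : ∀ s t : S, rS s t → rT (φ t) (φ s)) :
    ∀ f : ℕ → S, ∃ i j : ℕ, i < j ∧ (rS (f i) (f j) ∧ φ (f i) = φ (f j)) := by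
  intro f
  haveI : IsRefl S rS := ⟨hSrefl⟩
  haveI : IsTrans S rS := ⟨hStrans⟩
  haveI : IsPreorder S rS := { refl := hSrefl, trans := hStrans }
  have hpwo : (Set.univ : Set S).PartiallyWellOrderedOn rS := by
    intro g
    exact hSwqo (fun n => (g n).1)
  obtain ⟨g, hg⟩ := hpwo.exists_monotone_subseq (f := f) (fun n => Set.mem_univ _)
  by_contra hcon
  push_neg at hcon
  apply hTwf
  refine ⟨fun n => φ (f (g n)), fun n => ?_⟩
  have hle : rS (f (g n)) (f (g (n + 1))) := hg n (n + 1) (Nat.le_succ n)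
  refine ⟨hφ _ _ hle, fun heq => ?_⟩
  exact hcon (g n) (g (n + 1)) (g.strictMono (Nat.lt_succ_self n)) hle heq.symm
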